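/- arXiv:2102.00500 — 3 statements merged into one kernel-verified Lean document; each statement's English description precedes it below -/
import Mathlib

section
/- Let X be a finite nonempty set, P : X → X → ℝ with nonnegative entries, ε > 0, and let c : X → α and c' : X → β be labelings of X such that c is a refinement of c'. With the cluster-exit parameter δ(c) = 2 · max_{x∈X} ∑_{y : c(y) ≠ c(x)} P(x,y), assume δ(c) > 0 and δ(c') > 0, and let a, a' be real numbers. Suppose the closed intervals I = [a, ε/(2δ(c))] and I' = [a', ε/(2δ(c'))] are disjoint, and let t ∈ I and s ∈ I'. Then t < s. (This is the key step of the proposition that, when the MELD data model exhibits hierarchical structure, the number of latent clusters K_t is monotonically non-increasing in the diffusion time t: the finer clustering's interval of ε-separability by diffusion distances occurs strictly earlier in the diffusion process than the coarser clustering's interval.) -/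
/-- Key step of the monotonicity proposition for hierarchical MELD structure: the
finer clustering's interval of ε-separability occurs strictly earlier in the
diffusion process than the coarser clustering's interval. -/
theorem fine_interval_before_coarse_interval {X α β : Type*} [Fintype X] [Nonempty X]
    [DecidableEq α] [DecidableEq β]
    (P : X → X → ℝ) (hP : ∀ x y, 0 ≤ P x y)
    (ε : ℝ) (hε : 0 < ε)
    (c : X → α) (c' : X → β)
    (href : ∀ x y, c x = c y → c' x = c' y)
    (δc δc' : ℝ)
    (hδc : δc = 2 * Finset.univ.sup' Finset.univ_nonempty
        (fun x => ∑ y ∈ Finset.univ.filter (fun y => c y ≠ c x), P x y))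
    (hδc' : δc' = 2 * Finset.univ.sup' Finset.univ_nonempty
        (fun x => ∑ y ∈ Finset.univ.filter (fun y => c' y ≠ c' x), P x y))
    (hδcpos : 0 < δc) (hδc'pos : 0 < δc')
    (a a' t s : ℝ)
    (hdisj : Disjoint (Set.Icc a (ε / (2 * δc))) (Set.Icc a' (ε / (2 * δc'))))
    (ht : t ∈ Set.Icc a (ε / (2 * δc)))
    (hs : s ∈ Set.Icc a' (ε / (2 * δc'))) :
    t < s := by
  -- coarser clustering has smaller exit mass: δc' ≤ δc
  have hle : δc' ≤ δc := by
    rw [hδc, hδc']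
    have : (Finset.univ.sup' Finset.univ_nonempty
        (fun x => ∑ y ∈ Finset.univ.filter (fun y => c' y ≠ c' x), P x y)) ≤
        (Finset.univ.sup' Finset.univ_nonempty
        (fun x => ∑ y ∈ Finset.univ.filter (fun y => c y ≠ c x), P x y)) := by
      apply Finset.sup'_le
      intro x _
      refine le_trans (Finset.sum_le_sum_of_subset_of_nonneg ?_ (fun y _ _ => hP x y))
        (Finset.le_sup' (fun x => ∑ y ∈ Finset.univ.filter (fun y => c y ≠ c x), P x y)
          (Finset.mem_univ x))
      intro y hy
      simp only [Finset.mem_filter, Finset.mem_univ, true_and] at hy ⊢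
      exact fun h => hy (href y x h)
    linarith
  have hend : ε / (2 * δc) ≤ ε / (2 * δc') :=
    div_le_div_of_nonneg_left hε.le (by linarith) (by linarith)
  by_contra hts
  push_neg at hts
  have htI' : t ∈ Set.Icc a' (ε / (2 * δc')) :=
    ⟨le_trans hs.1 hts, le_trans ht.2 hend⟩
  exact (Set.disjoint_left.mp hdisj ht htI')
end

section
/- Let n ≥ 1, let P be an n×n real matrix, and let π : Fin n → ℝ satisfy π(u) > 0 for all u and Σ_u π(u) = 1. For t ∈ ℕ, define the relative pointwise distance Δ(t) = max_{i,j} |(Pᵗ)_{i,j} − π(j)| / π(j) and the diffusion distance D_t(x,y) = sqrt( Σ_u ((Pᵗ)_{x,u} − (Pᵗ)_{y,u})² / π(u) ). Then for all x, y, D_t(x,y) ≤ 2·Δ(t). (This is the main estimate in the proof of the near-equilibrium proposition: the diffusion distance between any two points is at most twice the relative pointwise distance of Pᵗ to its stationary distribution.) -/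
/-- Main estimate in the proof of the near-equilibrium proposition: the
diffusion distance between any two points at time t is at most twice the
relative pointwise distance Δ(t) = max_{i,j} |(Pᵗ)_{ij} − π(j)|/π(j) of Pᵗ to
its stationary distribution π. -/
theorem diffusion_distance_le_two_Delta {n : ℕ} (hn : 1 ≤ n)
    (P : Matrix (Fin n) (Fin n) ℝ)
    (π : Fin n → ℝ) (hπpos : ∀ u, 0 < π u) (hπsum : ∑ u, π u = 1)
    (t : ℕ) (Δ : ℝ)
    (hΔ : IsGreatest {d : ℝ | ∃ i j, d = |(P ^ t) i j - π j| / π j} Δ) :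
    ∀ x y, Real.sqrt (∑ u, ((P ^ t) x u - (P ^ t) y u) ^ 2 / π u) ≤ 2 * Δ := by
  intro x y
  have hΔ0 : 0 ≤ Δ := by
    obtain ⟨i, j, hij⟩ := hΔ.1
    rw [hij]
    exact div_nonneg (abs_nonneg _) (hπpos j).le
  have hbound : ∀ i j, |(P ^ t) i j - π j| ≤ Δ * π j := by
    intro i j
    have h := hΔ.2 ⟨i, j, rfl⟩
    rw [div_le_iff₀ (hπpos j)] at h
    exact h
  have hterm : ∀ u, ((P ^ t) x u - (P ^ t) y u) ^ 2 / π u ≤ 4 * Δ ^ 2 * π u := by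
    intro u
    have h1 : |(P ^ t) x u - (P ^ t) y u| ≤ 2 * (Δ * π u) := by
      calc |(P ^ t) x u - (P ^ t) y u|
          = |((P ^ t) x u - π u) - ((P ^ t) y u - π u)| := by ring_nf
        _ ≤ |(P ^ t) x u - π u| + |(P ^ t) y u - π u| := abs_sub _ _
        _ ≤ Δ * π u + Δ * π u := add_le_add (hbound x u) (hbound y u)
        _ = 2 * (Δ * π u) := by ring
    have h2 : ((P ^ t) x u - (P ^ t) y u) ^ 2 ≤ (2 * (Δ * π u)) ^ 2 := by
      rw [← sq_abs]
      exact pow_le_pow_left₀ (abs_nonneg _) h1 2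
    rw [div_le_iff₀ (hπpos u)]
    calc ((P ^ t) x u - (P ^ t) y u) ^ 2 ≤ (2 * (Δ * π u)) ^ 2 := h2
      _ = 4 * Δ ^ 2 * π u * π u := by ring
  have hsum : (∑ u, ((P ^ t) x u - (P ^ t) y u) ^ 2 / π u) ≤ 4 * Δ ^ 2 := by
    calc (∑ u, ((P ^ t) x u - (P ^ t) y u) ^ 2 / π u)
        ≤ ∑ u, 4 * Δ ^ 2 * π u := Finset.sum_le_sum fun u _ => hterm u
      _ = 4 * Δ ^ 2 * ∑ u, π u := by rw [Finset.mul_sum]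
      _ = 4 * Δ ^ 2 := by rw [hπsum, mul_one]
  calc Real.sqrt (∑ u, ((P ^ t) x u - (P ^ t) y u) ^ 2 / π u)
      ≤ Real.sqrt (4 * Δ ^ 2) := Real.sqrt_le_sqrt hsum
    _ = 2 * Δ := by
        rw [show (4 : ℝ) * Δ ^ 2 = (2 * Δ) ^ 2 by ring]
        exact Real.sqrt_sq (by positivity)
end

section
/- Let n ≥ 1, let P be an n×n real matrix, and let π : Fin n → ℝ satisfy π(u) > 0 for all u and Σ_u π(u) = 1; let π_min = min_u π(u). Let λ ∈ (0,1), τ ∈ (0,1), and t ∈ ℕ. Define Δ(t) = max_{i,j} |(Pᵗ)_{i,j} − π(j)| / π(j) and D_t(x,y) = sqrt( Σ_u ((Pᵗ)_{x,u} − (Pᵗ)_{y,u})² / π(u) ). Assume the spectral mixing bound Δ(t) ≤ λᵗ / π_min holds. If t > log(τ·π_min/2)/log(λ), then for all x, y, D_t(x,y) < τ. (Near-equilibrium proposition: once the diffusion time exceeds log_{|λ₂|}(τ·π_min/2), all pairwise diffusion distances drop below the stationarity threshold τ, justifying terminating the M-LUND algorithm's cluster analysis at time β^T.) -/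
/-- Near-equilibrium proposition: once the diffusion time t exceeds
log_{|λ₂|}(τ·π_min/2), all pairwise diffusion distances drop below the
stationarity threshold τ. Here `lam` stands for |λ₂|, and the hypothesis
`hmix` is the standard spectral mixing bound Δ(t) ≤ |λ₂|ᵗ/π_min. -/
theorem diffusion_distance_lt_tau_near_equilibrium {n : ℕ} (hn : 1 ≤ n)
    (P : Matrix (Fin n) (Fin n) ℝ)
    (π : Fin n → ℝ) (hπpos : ∀ u, 0 < π u) (hπsum : ∑ u, π u = 1)
    (πmin : ℝ) (hπmin : IsLeast {q : ℝ | ∃ u, q = π u} πmin)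
    (lam τ : ℝ) (hlam : lam ∈ Set.Ioo (0 : ℝ) 1) (hτ : τ ∈ Set.Ioo (0 : ℝ) 1)
    (t : ℕ) (Δ : ℝ)
    (hΔ : IsGreatest {d : ℝ | ∃ i j, d = |(P ^ t) i j - π j| / π j} Δ)
    (hmix : Δ ≤ lam ^ t / πmin)
    (ht : (t : ℝ) > Real.log (τ * πmin / 2) / Real.log lam) :
    ∀ x y, Real.sqrt (∑ u, ((P ^ t) x u - (P ^ t) y u) ^ 2 / π u) < τ := by
  intro x y
  obtain ⟨hlam0, hlam1⟩ := hlam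
  obtain ⟨hτ0, hτ1⟩ := hτ
  -- πmin positive
  obtain ⟨⟨u0, hu0⟩, hlb⟩ := hπmin
  have hπminpos : 0 < πmin := hu0 ▸ hπpos u0
  have hloglam : Real.log lam < 0 := Real.log_neg hlam0 hlam1
  have hrhs : (0 : ℝ) < τ * πmin / 2 := by positivity
  -- λ^t < τ πmin / 2
  have hlt : lam ^ t < τ * πmin / 2 := by
    have h1 : Real.log (τ * πmin / 2) / Real.log lam * Real.log lam
        > (t : ℝ) * Real.log lam := by
      exact mul_lt_mul_of_neg_right ht hloglam
    rw [div_mul_cancel₀ _ (ne_of_lt hloglam)] at h1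
    have h2 : Real.log (lam ^ t) < Real.log (τ * πmin / 2) := by
      rw [Real.log_pow]
      exact_mod_cast h1
    exact (Real.log_lt_log_iff (pow_pos hlam0 t) hrhs).mp h2
  -- entrywise bound
  have hent : ∀ i j, |(P ^ t) i j - π j| ≤ lam ^ t / πmin * π j := by
    intro i j
    have hmem : |(P ^ t) i j - π j| / π j ≤ Δ := hΔ.2 ⟨i, j, rfl⟩
    have := (div_le_iff₀ (hπpos j)).mp (hmem.trans hmix)
    linarith [this]
  have hkey : ∀ u : Fin n, ((P ^ t) x u - (P ^ t) y u) ^ 2 / π u < τ ^ 2 * π u := by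
    intro u
    have hdiff : |(P ^ t) x u - (P ^ t) y u| < τ * π u := by
      have h1 := hent x u
      have h2 := hent y u
      have htri : |(P ^ t) x u - (P ^ t) y u|
          ≤ |(P ^ t) x u - π u| + |(P ^ t) y u - π u| := by
        have := abs_sub ((P ^ t) x u - π u) ((P ^ t) y u - π u)
        calc |(P ^ t) x u - (P ^ t) y u|
            = |((P ^ t) x u - π u) - ((P ^ t) y u - π u)| := by ring_nf
          _ ≤ |(P ^ t) x u - π u| + |(P ^ t) y u - π u| := abs_sub _ _
      have hb : 2 * (lam ^ t / πmin) * π u < τ * π u := by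
        have h3 : lam ^ t / πmin < τ / 2 := by
          rw [div_lt_div_iff₀ hπminpos (by norm_num)]
          linarith
        have := mul_lt_mul_of_pos_right h3 (hπpos u)
        nlinarith [hπpos u]
      nlinarith [hπpos u]
    have hsq : ((P ^ t) x u - (P ^ t) y u) ^ 2 < (τ * π u) ^ 2 := by
      have := sq_lt_sq' (by linarith [neg_abs_le ((P ^ t) x u - (P ^ t) y u)]) 
        (lt_of_le_of_lt (le_abs_self _) hdiff)
      nlinarith [abs_nonneg ((P ^ t) x u - (P ^ t) y u), sq_abs ((P ^ t) x u - (P ^ t) y u), hdiff]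
    rw [div_lt_iff₀ (hπpos u)]
    nlinarith [hπpos u]
  have hsum : (∑ u, ((P ^ t) x u - (P ^ t) y u) ^ 2 / π u) < τ ^ 2 := by
    calc (∑ u, ((P ^ t) x u - (P ^ t) y u) ^ 2 / π u)
        < ∑ u, τ ^ 2 * π u := by
          apply Finset.sum_lt_sum_of_nonempty
          · exact Finset.univ_nonempty_iff.mpr (Fin.pos_iff_nonempty.mp hn)
          · intro u _; exact hkey u
      _ = τ ^ 2 := by rw [← Finset.mul_sum, hπsum, mul_one]
  rw [show τ = Real.sqrt (τ ^ 2) by rw [Real.sqrt_sq hτ0.le]]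
  exact Real.sqrt_lt_sqrt (Finset.sum_nonneg fun u _ => div_nonneg (sq_nonneg _) (hπpos u).le) hsum
end
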